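/- Knapsack reduction (Theorem 1, combinatorial core): let n ≥ 1, let w_1, …, w_n be positive integers and v_1, …, v_n be nonnegative reals, and let k be a nonnegative integer. Construct the graph G whose vertex set consists of a root Q and, for each i, a chain of w_i new vertices Q — u_i^1 — u_i^2 — ⋯ — u_i^{w_i}, the chains being pairwise vertex-disjoint; assign every edge probability 1, assign node weight v_i to the last chain vertex u_i^{w_i} and weight 0 to every other vertex. Then the maximum, over all edge subsets E' ⊆ E with |E'| ≤ k, of the expected information flow to Q in (V, E', p|_{E'}) equals the 0-1 knapsack optimum max { Σ_{i=1}^n v_i x_i : x ∈ {0,1}^n, Σ_{i=1}^n w_i x_i ≤ k }. -/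

import Mathlib

open Finset

/-- Probability of the possible world `F` of a probabilistic graph with edge set `E`
and edge-probability function `p`: each edge exists independently with probability `p e`. -/
noncomputable def worldProb {V : Type*} [DecidableEq V]
    (p : Sym2 V → ℝ) (E F : Finset (Sym2 V)) : ℝ :=
  (∏ e ∈ F, p e) * ∏ e ∈ E \ F, (1 - p e)

open scoped Classical in
/-- Reachability probability `P(A ↔ B)`: the total probability of the possible worlds
`F ⊆ E` in which `A` and `B` are connected in the spanning subgraph `(V, F)`. -/
noncomputable def reachProb {V : Type*} [DecidableEq V]
    (p : Sym2 V → ℝ) (E : Finset (Sym2 V)) (A B : V) : ℝ :=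
  ∑ F ∈ E.powerset,
    if (SimpleGraph.fromEdgeSet (↑F : Set (Sym2 V))).Reachable A B then worldProb p E F else 0

open scoped Classical in
/-- Information flow to `Q` in the possible world `F`: total weight of the vertices
connected to `Q` in the spanning subgraph `(V, F)` (`Q` itself counted). -/
noncomputable def flowW {V : Type*} [Fintype V]
    (W : V → ℝ) (Q : V) (F : Finset (Sym2 V)) : ℝ :=
  ∑ v : V, if (SimpleGraph.fromEdgeSet (↑F : Set (Sym2 V))).Reachable Q v then W v else 0

/-- Expected information flow to `Q` in the probabilistic graph with edge set `E`. -/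
noncomputable def expFlow {V : Type*} [Fintype V] [DecidableEq V]
    (p : Sym2 V → ℝ) (E : Finset (Sym2 V)) (W : V → ℝ) (Q : V) : ℝ :=
  ∑ F ∈ E.powerset, worldProb p E F * flowW W Q F

/-- Vertex type of the knapsack graph: a root `none` plus, for each item `i`,
a chain of `w i` fresh vertices `some ⟨i, j⟩`, the chains being pairwise disjoint. -/
abbrev KnapVertex (n : ℕ) (w : Fin n → ℕ) := Option ((i : Fin n) × Fin (w i))

/-- The `j`-th edge of chain `i`: it joins the root `none` to the first chain vertex
when `j = 0`, and the `(j-1)`-st chain vertex to the `j`-th chain vertex otherwise. -/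
def knapEdge {n : ℕ} {w : Fin n → ℕ} (i : Fin n) (j : Fin (w i)) :
    Sym2 (KnapVertex n w) :=
  if (j : ℕ) = 0 then s(none, some ⟨i, j⟩)
  else s(some ⟨i, ⟨(j : ℕ) - 1, Nat.lt_of_le_of_lt (Nat.sub_le _ _) j.isLt⟩⟩, some ⟨i, j⟩)

/-- The edge set of the knapsack graph: all chain edges. -/
noncomputable def knapEdges (n : ℕ) (w : Fin n → ℕ) : Finset (Sym2 (KnapVertex n w)) :=
  Finset.univ.image (fun x : (i : Fin n) × Fin (w i) => knapEdge x.1 x.2)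

/-- Node weights of the knapsack graph: the last vertex of chain `i` carries
weight `v i`, every other vertex carries weight `0`. -/
noncomputable def knapWeight {n : ℕ} {w : Fin n → ℕ} (v : Fin n → ℝ) :
    KnapVertex n w → ℝ
  | none => 0
  | some ⟨i, j⟩ => if (j : ℕ) = w i - 1 then v i else 0


section Aux

lemma expFlow_one' {V : Type*} [Fintype V] [DecidableEq V] (E : Finset (Sym2 V)) (W : V → ℝ) (Q : V) :
    expFlow (fun _ => 1) E W Q = flowW W Q E := by
  unfold expFlow
  rw [Finset.sum_eq_single E]
  · simp [worldProb]
  · intro F hF hne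
    have hsub := Finset.mem_powerset.mp hF
    have hne' : (E \ F).Nonempty := by
      rw [Finset.sdiff_nonempty]; intro h; exact hne (Finset.Subset.antisymm hsub h)
    obtain ⟨e, he⟩ := hne'
    unfold worldProb
    rw [Finset.prod_eq_zero he (by norm_num : (1:ℝ) - (fun _ => (1:ℝ)) e = 0), mul_zero, zero_mul]
  · intro h; exact absurd (Finset.mem_powerset.mpr le_rfl) h

lemma knapEdge_injective {n : ℕ} {w : Fin n → ℕ} :
    Function.Injective (fun x : (i : Fin n) × Fin (w i) => knapEdge x.1 x.2) := by
  intro x y h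
  simp only [knapEdge] at h
  have ex : (⟨x.1, x.2⟩ : (i : Fin n) × Fin (w i)) = x := rfl
  have ey : (⟨y.1, y.2⟩ : (i : Fin n) × Fin (w i)) = y := rfl
  split_ifs at h with h1 h2 h2
  · rw [Sym2.eq_iff] at h
    rcases h with ⟨-, h⟩ | ⟨h, -⟩
    · rw [ex, ey] at h; exact Option.some.inj h
    · exact absurd h (by simp)
  · rw [Sym2.eq_iff] at h
    rcases h with ⟨h, -⟩ | ⟨h, -⟩ <;> exact absurd h (by simp)
  · rw [Sym2.eq_iff] at h
    rcases h with ⟨h, -⟩ | ⟨-, h⟩ <;> exact absurd h (by simp)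
  · rw [Sym2.eq_iff] at h
    rcases h with ⟨-, h⟩ | ⟨ha, hb⟩
    · rw [ex, ey] at h; exact Option.some.inj h
    · exfalso
      have ha' := Option.some.inj ha
      have hb' := Option.some.inj hb
      have h1' : (x.2 : ℕ) - 1 = (y.2 : ℕ) :=
        congrArg (fun z : (i : Fin n) × Fin (w i) => (z.2 : ℕ)) ha'
      have h2' : (x.2 : ℕ) = (y.2 : ℕ) - 1 := by
        have := congrArg (fun z : (i : Fin n) × Fin (w i) => (z.2 : ℕ)) hb'
        simpa using this
      omega

/-- invariant carried along walks from the root -/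
def chainInv {n : ℕ} {w : Fin n → ℕ} (E' : Finset (Sym2 (KnapVertex n w))) :
    KnapVertex n w → Prop
  | none => True
  | some ⟨i, j⟩ => ∀ j' : Fin (w i), (j' : ℕ) ≤ (j : ℕ) → knapEdge i j' ∈ E'

lemma chainInv_step {n : ℕ} {w : Fin n → ℕ} (E' : Finset (Sym2 (KnapVertex n w)))
    (hE' : E' ⊆ knapEdges n w) {a b : KnapVertex n w}
    (hadj : (SimpleGraph.fromEdgeSet (↑E' : Set (Sym2 (KnapVertex n w)))).Adj a b)
    (ha : chainInv E' a) : chainInv E' b := by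
  rw [SimpleGraph.fromEdgeSet_adj] at hadj
  obtain ⟨hmem, -⟩ := hadj
  have hk := hE' hmem
  simp only [knapEdges, Finset.mem_image, Finset.mem_univ, true_and] at hk
  obtain ⟨⟨i, j⟩, hij⟩ := hk
  have hmem' : knapEdge i j ∈ E' := hij ▸ hmem
  simp only [knapEdge] at hij
  split_ifs at hij with h0
  · rw [Sym2.eq_iff] at hij
    rcases hij with ⟨rfl, rfl⟩ | ⟨rfl, rfl⟩
    · intro j' hj'
      have : j' = j := Fin.ext (by omega)
      rw [this]; exact hmem'
    · trivial
  · rw [Sym2.eq_iff] at hij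
    rcases hij with ⟨rfl, rfl⟩ | ⟨rfl, rfl⟩
    · intro j' hj'
      by_cases hc : (j' : ℕ) ≤ (j : ℕ) - 1
      · exact ha j' hc
      · have : j' = j := Fin.ext (by omega)
        rw [this]; exact hmem'
    · intro j' hj'
      exact ha j' (by simp at hj' ⊢; omega)

lemma reach_chainInv {n : ℕ} {w : Fin n → ℕ} (E' : Finset (Sym2 (KnapVertex n w)))
    (hE' : E' ⊆ knapEdges n w) {b : KnapVertex n w}
    (h : (SimpleGraph.fromEdgeSet (↑E' : Set (Sym2 (KnapVertex n w)))).Reachable none b) :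
    chainInv E' b := by
  obtain ⟨p⟩ := h
  have key : ∀ {a c : KnapVertex n w}
      (q : (SimpleGraph.fromEdgeSet (↑E' : Set (Sym2 (KnapVertex n w)))).Walk a c),
      chainInv E' a → chainInv E' c := by
    intro a c q
    induction q with
    | nil => exact id
    | cons h q ih => intro ha; exact ih (chainInv_step E' hE' h ha)
  exact key p trivial

lemma chain_reach {n : ℕ} {w : Fin n → ℕ} (E' : Finset (Sym2 (KnapVertex n w)))
    {i : Fin n} (h : ∀ j : Fin (w i), knapEdge i j ∈ E') (j : Fin (w i)) :
    (SimpleGraph.fromEdgeSet (↑E' : Set (Sym2 (KnapVertex n w)))).Reachable none (some ⟨i, j⟩) := by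
  obtain ⟨m, hm⟩ := j
  induction m with
  | zero =>
      refine SimpleGraph.Adj.reachable ?_
      rw [SimpleGraph.fromEdgeSet_adj]
      refine ⟨?_, by simp⟩
      have := h ⟨0, hm⟩
      simpa [knapEdge] using this
  | succ m ih =>
      have hm' : m < w i := Nat.lt_of_succ_lt hm
      refine (ih hm').trans (SimpleGraph.Adj.reachable ?_)
      rw [SimpleGraph.fromEdgeSet_adj]
      constructor
      · have := h ⟨m + 1, hm⟩
        simp only [knapEdge] at this
        rw [if_neg (by simp)] at this
        convert this using 2
        exact Finset.mem_coe
      · simp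

open scoped Classical in
lemma flowW_knap' {n : ℕ} {w : Fin n → ℕ} (hw : ∀ i, 0 < w i) (v : Fin n → ℝ)
    (F : Finset (Sym2 (KnapVertex n w))) :
    flowW (knapWeight v) (none : KnapVertex n w) F =
      ∑ i, if (SimpleGraph.fromEdgeSet (↑F : Set (Sym2 (KnapVertex n w)))).Reachable none
        (some ⟨i, ⟨w i - 1, Nat.sub_lt (hw i) one_pos⟩⟩) then v i else 0 := by
  unfold flowW
  rw [Fintype.sum_option, ← Finset.univ_sigma_univ, Finset.sum_sigma]
  have h0 : knapWeight v (none : KnapVertex n w) = 0 := rfl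
  rw [h0, ite_self, zero_add]
  refine Finset.sum_congr rfl fun i _ => ?_
  rw [Finset.sum_eq_single (⟨w i - 1, Nat.sub_lt (hw i) one_pos⟩ : Fin (w i))]
  · simp [knapWeight]
  · intro j _ hj
    have : (j : ℕ) ≠ w i - 1 := fun hc => hj (Fin.ext hc)
    simp [knapWeight, this]
  · intro h; exact absurd (Finset.mem_univ _) h

lemma ite_bool_eq {P : Prop} [Decidable P] {α : Type*} (a b : α) :
    (if (if P then true else false) = true then a else b) = if P then a else b := by
  by_cases h : P <;> simp [h]

end Aux

open scoped Classical in
/-- knapsack reduction, combinatorial core: in the knapsack graph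
built from positive integer weights `w i`, nonnegative values `v i` (all edge
probabilities `1`, weight `v i` on the last vertex of chain `i`, `0` elsewhere),
the maximum over edge subsets `E' ⊆ E` with `|E'| ≤ k` of the expected information
flow to the root equals the 0-1 knapsack optimum. -/
theorem maxFlow_eq_knapsack (n : ℕ) (hn : 1 ≤ n)
    (w : Fin n → ℕ) (hw : ∀ i, 0 < w i)
    (v : Fin n → ℝ) (hv : ∀ i, 0 ≤ v i) (k : ℕ) :
    sSup {r : ℝ | ∃ E' ⊆ knapEdges n w, E'.card ≤ k ∧
        r = expFlow (fun _ => 1) E' (knapWeight v) (none : KnapVertex n w)} =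
    sSup {r : ℝ | ∃ x : Fin n → Bool, (∑ i, if x i then w i else 0) ≤ k ∧
        r = ∑ i, if x i then v i else 0} := by
  classical
  have hlast : ∀ i : Fin n, w i - 1 < w i := fun i => Nat.sub_lt (hw i) one_pos
  -- boundedness of the two sets
  have hbdd2 : BddAbove {r : ℝ | ∃ x : Fin n → Bool, (∑ i, if x i then w i else 0) ≤ k ∧
      r = ∑ i, if x i then v i else 0} := by
    refine ⟨∑ i, v i, fun r hr => ?_⟩
    obtain ⟨x, -, rfl⟩ := hr
    refine Finset.sum_le_sum fun i _ => ?_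
    split_ifs
    exacts [le_rfl, hv i]
  have hbdd1 : BddAbove {r : ℝ | ∃ E' ⊆ knapEdges n w, E'.card ≤ k ∧
      r = expFlow (fun _ => 1) E' (knapWeight v) (none : KnapVertex n w)} := by
    refine ⟨∑ i, v i, fun r hr => ?_⟩
    obtain ⟨E', hsub, hcard, rfl⟩ := hr
    rw [expFlow_one', flowW_knap' hw]
    refine Finset.sum_le_sum fun i _ => ?_
    split_ifs
    exacts [le_rfl, hv i]
  have hne1 : {r : ℝ | ∃ E' ⊆ knapEdges n w, E'.card ≤ k ∧
      r = expFlow (fun _ => 1) E' (knapWeight v) (none : KnapVertex n w)}.Nonempty :=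
    ⟨_, ∅, Finset.empty_subset _, by simp, rfl⟩
  have hne2 : {r : ℝ | ∃ x : Fin n → Bool, (∑ i, if x i then w i else 0) ≤ k ∧
      r = ∑ i, if x i then v i else 0}.Nonempty :=
    ⟨0, fun _ => false, by simp, by simp⟩
  apply le_antisymm
  · refine csSup_le hne1 fun r hr => ?_
    obtain ⟨E', hsub, hcard, rfl⟩ := hr
    rw [expFlow_one', flowW_knap' hw]
    set R : Fin n → Prop := fun i =>
      (SimpleGraph.fromEdgeSet (↑E' : Set (Sym2 (KnapVertex n w)))).Reachable none
        (some ⟨i, ⟨w i - 1, Nat.sub_lt (hw i) one_pos⟩⟩) with hR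
    refine le_csSup hbdd2 ⟨fun i => if R i then true else false, ?_, ?_⟩
    · -- weight bound
      have hTsub : ((Finset.univ.filter R).sigma fun i => (Finset.univ : Finset (Fin (w i)))).image
          (fun y : (i : Fin n) × Fin (w i) => knapEdge y.1 y.2) ⊆ E' := by
        intro e he
        simp only [Finset.mem_image, Finset.mem_sigma, Finset.mem_filter, Finset.mem_univ,
          true_and] at he
        obtain ⟨⟨i, j⟩, ⟨hi, -⟩, rfl⟩ := he
        have hinv := reach_chainInv E' hsub hi
        exact hinv j (by simpa using Nat.le_sub_one_of_lt j.isLt)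
      have hcardT : (((Finset.univ.filter R).sigma fun i => (Finset.univ : Finset (Fin (w i)))).image
          (fun y : (i : Fin n) × Fin (w i) => knapEdge y.1 y.2)).card
          = ∑ i ∈ Finset.univ.filter R, w i := by
        rw [Finset.card_image_of_injective _ knapEdge_injective, Finset.card_sigma]
        simp
      have hwk : ∑ i ∈ Finset.univ.filter R, w i ≤ k :=
        le_trans (hcardT ▸ Finset.card_le_card hTsub) hcard
      have hrw : (∑ i, if (if R i then true else false) = true then w i else 0)
          = ∑ i ∈ Finset.univ.filter R, w i := by
        rw [Finset.sum_filter]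
        exact Finset.sum_congr rfl fun i _ => by split_ifs <;> simp_all
      calc (∑ i, if (fun i => if R i then true else false) i then w i else 0)
          = ∑ i ∈ Finset.univ.filter R, w i := hrw
        _ ≤ k := hwk
    · exact Finset.sum_congr rfl fun i _ => (ite_bool_eq _ _).symm
  · refine csSup_le hne2 fun r hr => ?_
    obtain ⟨x, hk', rfl⟩ := hr
    set E' := ((Finset.univ.filter (fun i => x i = true)).sigma
        fun i => (Finset.univ : Finset (Fin (w i)))).image
        (fun y : (i : Fin n) × Fin (w i) => knapEdge y.1 y.2) with hE'
    have hsub : E' ⊆ knapEdges n w := by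
      intro e he
      rw [hE', Finset.mem_image] at he
      obtain ⟨y, -, rfl⟩ := he
      exact Finset.mem_image.mpr ⟨y, Finset.mem_univ _, rfl⟩
    have hcard : E'.card ≤ k := by
      rw [hE', Finset.card_image_of_injective _ knapEdge_injective, Finset.card_sigma]
      simp only [Finset.card_univ, Fintype.card_fin]
      calc ∑ i ∈ Finset.univ.filter (fun i => x i = true), w i
          = ∑ i, if x i then w i else 0 := by rw [Finset.sum_filter]
        _ ≤ k := hk'
    refine le_trans ?_ (le_csSup hbdd1 ⟨E', hsub, hcard, rfl⟩)
    rw [expFlow_one', flowW_knap' hw]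
    refine Finset.sum_le_sum fun i _ => ?_
    by_cases hx : x i = true
    · have hall : ∀ j : Fin (w i), knapEdge i j ∈ E' := fun j =>
        Finset.mem_image.mpr ⟨⟨i, j⟩, Finset.mem_sigma.mpr
          ⟨Finset.mem_filter.mpr ⟨Finset.mem_univ _, hx⟩, Finset.mem_univ _⟩, rfl⟩
      have hreach := chain_reach E' hall ⟨w i - 1, Nat.sub_lt (hw i) one_pos⟩
      simp [hx, hreach]
    · simp only [hx, if_false, Bool.false_eq_true]
      split_ifs
      exacts [hv i, le_rfl]
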